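/- Let (M,μ) be a probability space, f : M → M measure-preserving, X a metric space, and φ : M → X^ℕ measurable with a_x(m,n) = d(φ(x)_m, φ(x)_n) a stationary integrable subadditive process over f. Define L(x) = max(0, lim_{K→∞} limsup_{n→∞} min_{K≤k≤n} (d(φ(x)_0,φ(x)_n) - d(φ(x)_n,φ(x)_k))/k). Then L(x) ≤ L(f(x)) for μ-almost every x ∈ M, and hence L is μ-almost everywhere invariant. -/

import Mathlib

open Filter MeasureTheory

/-- `L(x) = max(0, lim_{K→∞} limsup_{n→∞} min_{K≤k≤n} (d(φ(x)_0,φ(x)_n) - d(φ(x)_n,φ(x)_k))/k)`,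
the limit over `K` being the supremum since the inner expression is nondecreasing in `K`. -/
noncomputable def Lfun {M X : Type*} [MetricSpace X] (φ : M → ℕ → X) (x : M) : EReal :=
  max 0 (⨆ K : ℕ, Filter.limsup
    (fun n : ℕ => ((sInf {r : ℝ | ∃ k : ℕ, K ≤ k ∧ k ≤ n ∧
      r = (dist (φ x 0) (φ x n) - dist (φ x n) (φ x k)) / k} : ℝ) : EReal)) Filter.atTop)

section Aux

variable {M X : Type*} [MetricSpace X] (φ : M → ℕ → X)

/-- The individual term in the infimum. -/
noncomputable def eterm (x : M) (n k : ℕ) : ℝ :=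
  (dist (φ x 0) (φ x n) - dist (φ x n) (φ x k)) / k

/-- The inner infimum in `Lfun`. -/
noncomputable def ufun (x : M) (K n : ℕ) : ℝ :=
  sInf {r : ℝ | ∃ k : ℕ, K ≤ k ∧ k ≤ n ∧
      r = (dist (φ x 0) (φ x n) - dist (φ x n) (φ x k)) / k}

/-- The limsup in `Lfun`. -/
noncomputable def Sfun (x : M) (K : ℕ) : EReal :=
  Filter.limsup (fun n : ℕ => ((ufun φ x K n : ℝ) : EReal)) Filter.atTop

lemma Lfun_eq (x : M) : Lfun φ x = max 0 (⨆ K : ℕ, Sfun φ x K) := rfl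

lemma set_eq (x : M) (K n : ℕ) :
    {r : ℝ | ∃ k : ℕ, K ≤ k ∧ k ≤ n ∧
      r = (dist (φ x 0) (φ x n) - dist (φ x n) (φ x k)) / k}
    = eterm φ x n '' ↑(Finset.Icc K n) := by
  ext r
  constructor
  · rintro ⟨k, h1, h2, h3⟩
    exact ⟨k, by simp [Finset.mem_Icc, h1, h2], h3.symm⟩
  · rintro ⟨k, hk, h3⟩
    simp only [Finset.coe_Icc, Set.mem_Icc] at hk
    exact ⟨k, hk.1, hk.2, h3.symm⟩

lemma ufun_eq (x : M) {K n : ℕ} (h : K ≤ n) :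
    ufun φ x K n = (Finset.Icc K n).inf' (Finset.nonempty_Icc.2 h) (eterm φ x n) := by
  rw [ufun, set_eq, Finset.inf'_eq_csInf_image]

lemma ufun_le (x : M) {K n k : ℕ}
    (h1 : K ≤ k) (h2 : k ≤ n) : ufun φ x K n ≤ eterm φ x n k := by
  rw [ufun_eq φ x (h1.trans h2)]
  exact Finset.inf'_le _ (Finset.mem_Icc.2 ⟨h1, h2⟩)

lemma ufun_exists (x : M) {K n : ℕ} (h : K ≤ n) :
    ∃ k, K ≤ k ∧ k ≤ n ∧ ufun φ x K n = eterm φ x n k := by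
  obtain ⟨k, hk, hk2⟩ := Finset.exists_mem_eq_inf' (Finset.nonempty_Icc.2 h) (eterm φ x n)
  rw [Finset.mem_Icc] at hk
  exact ⟨k, hk.1, hk.2, by rw [ufun_eq φ x h, hk2]⟩

/-- The basic real inequality coming from the triangle inequality and stationarity. -/
lemma step1 (x y : M)
    (h : ∀ m n : ℕ, dist (φ y m) (φ y n) = dist (φ x (m+1)) (φ x (n+1)))
    {K n : ℕ} (hKn : K ≤ n) :
    ufun φ x (K+1) (n+1) ≤ dist (φ x 0) (φ x 1) / ((K:ℝ)+1) + max (ufun φ y K n) 0 := by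
  set c := dist (φ x 0) (φ x 1) with hc
  have hc0 : 0 ≤ c := dist_nonneg
  obtain ⟨k₀, hk1, hk2, hk3⟩ := ufun_exists φ y hKn
  refine (ufun_le φ x (by omega) (by omega) :
      ufun φ x (K+1) (n+1) ≤ eterm φ x (n+1) (k₀+1)).trans ?_
  set num := dist (φ y 0) (φ y n) - dist (φ y n) (φ y k₀) with hnum
  have hpos : (0:ℝ) < (k₀:ℝ)+1 := by positivity
  have e1 : eterm φ x (n+1) (k₀+1) ≤ c / ((k₀:ℝ)+1) + num / ((k₀:ℝ)+1) := by
    rw [eterm, ← add_div]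
    have hcast : ((k₀+1 : ℕ) : ℝ) = (k₀:ℝ)+1 := by push_cast; ring
    rw [hcast]
    apply div_le_div_of_nonneg_right ?_ hpos.le
    have h1 : dist (φ x 0) (φ x (n+1)) ≤ c + dist (φ y 0) (φ y n) := by
      rw [h 0 n]; exact dist_triangle _ (φ x 1) _
    have h2 : dist (φ x (n+1)) (φ x (k₀+1)) = dist (φ y n) (φ y k₀) := (h n k₀).symm
    rw [h2, hnum]; linarith
  have e2 : c / ((k₀:ℝ)+1) ≤ c / ((K:ℝ)+1) := by
    apply div_le_div_of_nonneg_left hc0 (by positivity)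
    exact_mod_cast by omega
  have e3 : num / ((k₀:ℝ)+1) ≤ max (ufun φ y K n) 0 := by
    rcases Nat.eq_zero_or_pos k₀ with h0 | h0
    · have : num = 0 := by subst h0; rw [hnum, dist_comm]; ring
      rw [this, zero_div]
      exact le_max_right _ _
    · have hk₀pos : (0:ℝ) < (k₀:ℝ) := by exact_mod_cast h0
      have ht : ufun φ y K n = num / (k₀:ℝ) := by rw [hk3, eterm, hnum]
      rcases le_or_gt 0 num with hn0 | hn0
      · refine le_trans ?_ (le_max_left _ _)
        rw [ht]
        exact div_le_div_of_nonneg_left hn0 hk₀pos (by linarith)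
      · refine le_trans ?_ (le_max_right _ _)
        exact div_nonpos_of_nonpos_of_nonneg hn0.le hpos.le
  calc eterm φ x (n+1) (k₀+1) ≤ c / ((k₀:ℝ)+1) + num / ((k₀:ℝ)+1) := e1
    _ ≤ c / ((K:ℝ)+1) + max (ufun φ y K n) 0 := add_le_add e2 e3

/-- The limsup version of `step1`. -/
lemma step2 (x y : M) (K : ℕ) (c : ℝ)
    (hval : ∀ n, K ≤ n → ufun φ x (K+1) (n+1) ≤ c + max (ufun φ y K n) 0) :
    Sfun φ x (K+1) ≤ (c : EReal) + max (Sfun φ y K) 0 := by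
  have shift : Sfun φ x (K+1)
      = limsup (fun n => ((ufun φ x (K+1) (n+1) : ℝ) : EReal)) atTop :=
    (limsup_nat_add (fun n => ((ufun φ x (K+1) n : ℝ) : EReal)) 1).symm
  rw [shift]
  calc limsup (fun n => ((ufun φ x (K+1) (n+1) : ℝ) : EReal)) atTop
      ≤ limsup ((fun _ => (c : EReal)) + fun n => max ((ufun φ y K n : ℝ) : EReal) 0) atTop := by
        refine limsup_le_limsup ?_
        filter_upwards [eventually_ge_atTop K] with n hn
        have h1 := hval n hn
        have h2 : ((ufun φ x (K+1) (n+1) : ℝ) : EReal)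
            ≤ ((c + max (ufun φ y K n) 0 : ℝ) : EReal) := EReal.coe_le_coe_iff.2 h1
        refine h2.trans_eq ?_
        rw [EReal.coe_add]
        simp only [Pi.add_apply]
        congr 1
    _ ≤ limsup (fun _ => (c : EReal)) atTop
          + limsup (fun n => max ((ufun φ y K n : ℝ) : EReal) 0) atTop := by
        apply EReal.limsup_add_le
        · left; rw [limsup_const]; exact EReal.coe_ne_bot c
        · left; rw [limsup_const]; exact EReal.coe_ne_top c
    _ = (c : EReal) + limsup (fun n => max ((ufun φ y K n : ℝ) : EReal) 0) atTop := by
        rw [limsup_const]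
    _ ≤ (c : EReal) + max (Sfun φ y K) 0 := by
        apply add_le_add_right
        rw [show (fun n => max ((ufun φ y K n : ℝ) : EReal) 0)
            = fun n => max ((ufun φ y K n : ℝ) : EReal) ((fun _ => (0:EReal)) n) from rfl]
        rw [limsup_max, limsup_const]
        exact le_rfl

lemma Sfun_mono (x : M) : Monotone (Sfun φ x) := by
  apply monotone_nat_of_le_succ
  intro K
  refine limsup_le_limsup ?_
  filter_upwards [eventually_ge_atTop (K+1)] with n hn
  apply EReal.coe_le_coe_iff.2
  obtain ⟨k₀, h1, h2, h3⟩ := ufun_exists φ x (hn : K+1 ≤ n)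
  calc ufun φ x K n ≤ eterm φ x n k₀ := ufun_le φ x (by omega) h2
    _ = ufun φ x (K+1) n := h3.symm

/-- The key pointwise inequality. -/
lemma key_le (x y : M)
    (h : ∀ m n : ℕ, dist (φ y m) (φ y n) = dist (φ x (m+1)) (φ x (n+1))) :
    Lfun φ x ≤ Lfun φ y := by
  set c := dist (φ x 0) (φ x 1) with hc
  have hc0 : 0 ≤ c := dist_nonneg
  have hLy0 : (0:EReal) ≤ Lfun φ y := le_max_left _ _
  have hstep : ∀ K : ℕ, Sfun φ x (K+1)
      ≤ ((c / ((K:ℝ)+1) : ℝ) : EReal) + max (Sfun φ y K) 0 :=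
    fun K => step2 φ x y K _ (fun n hn => step1 φ x y h hn)
  have hmax : ∀ K : ℕ, max (Sfun φ y K) 0 ≤ Lfun φ y := by
    intro K
    rw [Lfun_eq φ y]
    exact max_le ((le_iSup (Sfun φ y) K).trans (le_max_right _ _)) (le_max_left _ _)
  have hbound : ∀ K K' : ℕ, K ≤ K' →
      Sfun φ x K ≤ ((c / ((K':ℝ)+1) : ℝ) : EReal) + Lfun φ y := by
    intro K K' hKK'
    calc Sfun φ x K ≤ Sfun φ x (K'+1) := Sfun_mono φ x (by omega)
      _ ≤ ((c / ((K':ℝ)+1) : ℝ) : EReal) + max (Sfun φ y K') 0 := hstep K'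
      _ ≤ _ := add_le_add_right (hmax K') _
  rw [Lfun_eq φ x]
  refine max_le hLy0 (iSup_le fun K => ?_)
  rcases eq_or_ne (Lfun φ y) ⊤ with htop | htop
  · rw [htop]; exact le_top
  have hbot : Lfun φ y ≠ ⊥ := by
    intro hb
    rw [hb] at hLy0
    simp at hLy0
  set ℓ := (Lfun φ y).toReal with hl
  have hcoe : ((ℓ:ℝ):EReal) = Lfun φ y := EReal.coe_toReal htop hbot
  by_contra hcon
  push_neg at hcon
  obtain ⟨q, hq1, hq2⟩ := EReal.exists_rat_btwn_of_lt hcon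
  have hlq : ℓ < (q:ℝ) := by
    rw [← hcoe] at hq1
    exact_mod_cast hq1
  set K' := K + ⌈c/((q:ℝ)-ℓ)⌉₊ with hK'
  have hq0 : (0:ℝ) < (q:ℝ)-ℓ := by linarith
  have hK'le : c/((K':ℝ)+1) < (q:ℝ)-ℓ := by
    have h1 : c/((q:ℝ)-ℓ) ≤ (K':ℝ) :=
      le_trans (Nat.le_ceil _) (by exact_mod_cast Nat.le_add_left _ _)
    rw [div_le_iff₀ hq0] at h1
    rw [div_lt_iff₀ (by positivity : (0:ℝ) < (K':ℝ)+1)]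
    nlinarith
  have hb1 : Sfun φ x K ≤ ((c/((K':ℝ)+1) + ℓ : ℝ) : EReal) := by
    have := hbound K K' (Nat.le_add_right _ _)
    rwa [← hcoe, ← EReal.coe_add] at this
  have hb2 : Sfun φ x K < ((q:ℝ):EReal) :=
    lt_of_le_of_lt hb1 (EReal.coe_lt_coe_iff.2 (by linarith))
  exact absurd (hq2.trans hb2) (lt_irrefl _)

end Aux

lemma meas_inf' {M : Type*} [MeasurableSpace M] (g : ℕ → M → ℝ) (hg : ∀ k, Measurable (g k))
    (s : Finset ℕ) (hs : s.Nonempty) :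
    Measurable fun x => s.inf' hs (fun k => g k x) := by
  induction hs using Finset.Nonempty.cons_induction with
  | singleton a => simpa using hg a
  | cons a s ha hs ih =>
      simp only [Finset.inf'_cons hs]
      exact (hg a).min ih

lemma measurable_Lfun {M : Type*} [MeasurableSpace M] {X : Type*} [MetricSpace X]
    (φ : M → ℕ → X) (hmeas : ∀ m n : ℕ, Measurable fun x => dist (φ x m) (φ x n)) :
    Measurable (Lfun φ) := by
  have hu : ∀ K n : ℕ, Measurable fun x => ufun φ x K n := by
    intro K n
    rcases le_or_gt K n with h | h
    · have : (fun x => ufun φ x K n)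
          = fun x => (Finset.Icc K n).inf' (Finset.nonempty_Icc.2 h) (eterm φ x n) := by
        funext x; exact ufun_eq φ x h
      rw [this]
      exact meas_inf' (fun k x => eterm φ x n k)
        (fun k => ((hmeas 0 n).sub (hmeas n k)).div_const _) _ _
    · have : (fun x => ufun φ x K n) = fun _ => (0 : ℝ) := by
        funext x
        have hset : {r : ℝ | ∃ k : ℕ, K ≤ k ∧ k ≤ n ∧
            r = (dist (φ x 0) (φ x n) - dist (φ x n) (φ x k)) / k} = ∅ := by
          ext r
          simp only [Set.mem_setOf_eq, Set.mem_empty_iff_false, iff_false]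
          rintro ⟨k, h1, h2, -⟩
          exact absurd (h1.trans h2) h.not_ge
        rw [ufun, hset, Real.sInf_empty]
      rw [this]; exact measurable_const
  refine measurable_const.max (Measurable.iSup fun K => Measurable.limsup fun n => ?_)
  exact measurable_coe_real_ereal.comp (hu K n)

lemma ae_invariant {M : Type*} [MeasurableSpace M] {μ : Measure M} [IsProbabilityMeasure μ]
    {f : M → M} (hf : MeasurePreserving f μ μ) (g : M → EReal) (hg : Measurable g)
    (hle : ∀ x, g x ≤ g (f x)) : ∀ᵐ x ∂μ, g x = g (f x) := by
  have hA : ∀ q : ℚ, MeasurableSet {x | g x < (((q:ℝ)):EReal)} :=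
    fun q => measurableSet_lt hg measurable_const
  have hsub : ∀ q : ℚ, f ⁻¹' {x | g x < (((q:ℝ)):EReal)} ⊆ {x | g x < (((q:ℝ)):EReal)} :=
    fun q x hx => lt_of_le_of_lt (hle x) hx
  have hnull : ∀ q : ℚ,
      μ ({x | g x < (((q:ℝ)):EReal)} \ f ⁻¹' {x | g x < (((q:ℝ)):EReal)}) = 0 := by
    intro q
    rw [measure_diff (hsub q) ((hA q).preimage hf.measurable).nullMeasurableSet
      (measure_ne_top μ _)]
    rw [hf.measure_preimage (hA q).nullMeasurableSet]
    exact tsub_self _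
  rw [MeasureTheory.ae_iff]
  refine measure_mono_null (fun x hx => ?_)
    (measure_iUnion_null (s := fun q : ℚ =>
      ({x | g x < (((q:ℝ)):EReal)} \ f ⁻¹' {x | g x < (((q:ℝ)):EReal)})) fun q => hnull q)
  · show x ∈ ⋃ q : ℚ, ({x | g x < (((q:ℝ)):EReal)} \ f ⁻¹' {x | g x < (((q:ℝ)):EReal)})
    have hlt : g x < g (f x) := lt_of_le_of_ne (hle x) hx
    obtain ⟨q, h1, h2⟩ := EReal.exists_rat_btwn_of_lt hlt
    exact Set.mem_iUnion.2 ⟨q, h1, fun hmem => absurd hmem (not_lt.2 h2.le)⟩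

theorem stmt6 {M : Type*} [MeasurableSpace M] (μ : Measure M) [IsProbabilityMeasure μ]
    (f : M → M) (hf : MeasurePreserving f μ μ)
    {X : Type*} [MetricSpace X] (φ : M → ℕ → X)
    (hmeas : ∀ m n : ℕ, Measurable fun x => dist (φ x m) (φ x n))
    (hstat : ∀ x : M, ∀ m n : ℕ,
      dist (φ (f x) m) (φ (f x) n) = dist (φ x (m + 1)) (φ x (n + 1)))
    (hint : Integrable (fun x => dist (φ x 0) (φ x 1)) μ) :
    (∀ᵐ x ∂μ, Lfun φ x ≤ Lfun φ (f x)) ∧ (∀ᵐ x ∂μ, Lfun φ x = Lfun φ (f x)) := by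
  have hpt : ∀ x, Lfun φ x ≤ Lfun φ (f x) := fun x => key_le φ x (f x) (hstat x)
  exact ⟨Filter.Eventually.of_forall hpt,
    ae_invariant hf (Lfun φ) (measurable_Lfun φ hmeas) hpt⟩
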